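/- arXiv:1301.0252 — 2 statements merged into one kernel-verified Lean document; each statement's English description precedes it below -/
import Mathlib

section
/- For every prime p ≥ 5 and nonnegative integers n ≥ m, the binomial coefficient C(n·p, m·p) is congruent to C(n,m) modulo p³. -/
open Finset Polynomial


lemma six_mul_sum_sq : ∀ n : ℕ, 6 * ∑ j ∈ range n, j^2 = n * (n-1) * (2*n-1)
  | 0 => by simp
  | (n+1) => by
    rw [Finset.sum_range_succ, Nat.mul_add, six_mul_sum_sq n]
    cases n with
    | zero => simp
    | succ k =>
      have h : 2 * (k + 1) - 1 = 2 * k + 1 := by omega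
      have h2 : 2 * (k + 1 + 1) - 1 = 2 * k + 3 := by omega
      simp only [Nat.succ_sub_one, h, h2]; ring

lemma choose_p_sub_one (p : ℕ) (hp : p.Prime) :
    ∀ k, k < p → ((p-1).choose k : ZMod p) = (-1)^k
  | 0, _ => by simp
  | (k+1), hk => by
    have h1 : (p-1) + 1 = p := Nat.succ_pred_eq_of_pos hp.pos
    have h2 : p.choose (k+1) = (p-1).choose k + (p-1).choose (k+1) := by
      rw [← h1, Nat.choose_succ_succ]; simp
    have h3 : (p.choose (k+1) : ZMod p) = 0 := by
      rw [ZMod.natCast_eq_zero_iff]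
      exact Nat.Prime.dvd_choose_self hp (Nat.succ_ne_zero k) hk
    have h4 := choose_p_sub_one p hp k (lt_trans (Nat.lt_succ_self k) hk)
    have : ((p-1).choose k : ZMod p) + ((p-1).choose (k+1) : ZMod p) = 0 := by
      rw [← Nat.cast_add, ← h2, h3]
    rw [h4] at this
    rw [pow_succ]
    linear_combination this

lemma aj_mul_j (p : ℕ) (hp : p.Prime) (j : ℕ) (hj0 : 0 < j) (hjp : j < p) :
    (p.choose j / p) * j = (p-1).choose (j-1) := by
  have hd : p ∣ p.choose j := Nat.Prime.dvd_choose_self hp (Nat.pos_iff_ne_zero.mp hj0) hjp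
  have h1 : (p-1) + 1 = p := Nat.succ_pred_eq_of_pos hp.pos
  have h2 : (j-1) + 1 = j := Nat.succ_pred_eq_of_pos hj0
  have key : p * (p-1).choose (j-1) = p.choose j * j := by
    have := Nat.add_one_mul_choose_eq (p-1) (j-1)
    rwa [h1, h2] at this
  have : p * ((p.choose j / p) * j) = p * ((p-1).choose (j-1)) := by
    rw [← mul_assoc, Nat.mul_div_cancel' hd, key]
  exact Nat.eq_of_mul_eq_mul_left hp.pos this

lemma sum_range_zmod {M : Type*} [AddCommMonoid M] (p : ℕ) [NeZero p] (f : ZMod p → M) :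
    ∑ j ∈ range p, f j = ∑ x : ZMod p, f x := by
  apply Finset.sum_bij' (fun j _ => ((j : ℕ) : ZMod p)) (fun x _ => ZMod.val x)
  · intro a ha; exact Finset.mem_univ _
  · intro x _; exact Finset.mem_range.mpr (ZMod.val_lt x)
  · intro a ha; exact ZMod.val_cast_of_lt (Finset.mem_range.mp ha)
  · intro x _; exact ZMod.natCast_rightInverse x
  · intro a ha; rfl

lemma sum_sq_zmod (p : ℕ) [NeZero p] (hp : p.Prime) (hp5 : 5 ≤ p) :
    ∑ x : ZMod p, x^2 = 0 := by
  haveI : NeZero p := ⟨hp.pos.ne'⟩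
  have h1 : ∑ x : ZMod p, x^2 = ∑ j ∈ range p, ((j : ZMod p))^2 := (sum_range_zmod p _).symm
  have h2 : ∑ j ∈ range p, ((j : ZMod p))^2 = ((∑ j ∈ range p, j^2 : ℕ) : ZMod p) := by
    push_cast; rfl
  have h3 : p ∣ ∑ j ∈ range p, j^2 := by
    have h6 : p ∣ 6 * ∑ j ∈ range p, j^2 := by
      rw [six_mul_sum_sq p]; exact Dvd.dvd.mul_right (Dvd.dvd.mul_right dvd_rfl _) _
    rcases (Nat.Prime.dvd_mul hp).mp h6 with h | h
    · have h7 : p ≤ 6 := Nat.le_of_dvd (by norm_num) h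
      interval_cases p
      · exact absurd h (by decide)
      · exact absurd hp (by norm_num)
    · exact h
  rw [h1, h2, ZMod.natCast_eq_zero_iff]
  exact h3

lemma wolstenholme_sum (p : ℕ) (hp : p.Prime) (hp5 : 5 ≤ p) :
    p ∣ ∑ j ∈ Ioo 0 p, (p.choose j / p) * (p.choose (p - j) / p) := by
  haveI : NeZero p := ⟨hp.pos.ne'⟩
  haveI : Fact p.Prime := ⟨hp⟩
  rw [← ZMod.natCast_eq_zero_iff]
  push_cast
  have hterm : ∀ j ∈ Ioo 0 p,
      ((p.choose j / p : ℕ) : ZMod p) * ((p.choose (p - j) / p : ℕ) : ZMod p)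
        = ((j : ZMod p)⁻¹)^2 := by
    intro j hj
    rw [Finset.mem_Ioo] at hj
    obtain ⟨hj0, hjp⟩ := hj
    have hjne : (j : ZMod p) ≠ 0 := by
      rw [Ne, ZMod.natCast_eq_zero_iff]
      intro h; exact absurd (Nat.le_of_dvd hj0 h) (by omega)
    have hpj0 : 0 < p - j := by omega
    have hpjp : p - j < p := by omega
    have e1 : ((p.choose j / p : ℕ) : ZMod p) = (-1)^(j-1) * (j : ZMod p)⁻¹ := by
      have := aj_mul_j p hp j hj0 hjp
      have hc : ((p.choose j / p : ℕ) : ZMod p) * (j : ZMod p) = (-1)^(j-1) := by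
        rw [← Nat.cast_mul, this, choose_p_sub_one p hp _ (by omega)]
      field_simp at hc ⊢
      rw [hc]
    have e2 : ((p.choose (p-j) / p : ℕ) : ZMod p) = (-1)^(p-j-1) * (-(j:ZMod p))⁻¹ := by
      have := aj_mul_j p hp (p-j) hpj0 hpjp
      have hc : ((p.choose (p-j) / p : ℕ) : ZMod p) * ((p - j : ℕ) : ZMod p) = (-1)^(p-j-1) := by
        rw [← Nat.cast_mul, this, choose_p_sub_one p hp _ (by omega)]
      rw [Nat.cast_sub (le_of_lt hjp), ZMod.natCast_self, zero_sub] at hc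
      have hne : -(j : ZMod p) ≠ 0 := neg_ne_zero.mpr hjne
      field_simp at hc ⊢
      linear_combination (-1) * hc
    rw [e1, e2, inv_neg]
    have hsign : (-1 : ZMod p)^(j-1) * (-1 : ZMod p)^(p-j-1) = -1 := by
      rw [← pow_add]
      have h : (j-1) + (p-j-1) = p - 2 := by omega
      rw [h]
      have hodd : Odd (p - 2) := by
        have := hp.odd_of_ne_two (by omega)
        rcases this with ⟨c, hc⟩
        exact ⟨c - 1, by omega⟩
      exact Odd.neg_one_pow hodd
    calc (-1:ZMod p)^(j-1) * (j:ZMod p)⁻¹ * ((-1)^(p-j-1) * -(j:ZMod p)⁻¹)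
        = ((-1 : ZMod p)^(j-1) * (-1)^(p-j-1)) * -((j:ZMod p)⁻¹ * (j:ZMod p)⁻¹) := by ring
      _ = ((j : ZMod p)⁻¹)^2 := by rw [hsign]; ring
  rw [Finset.sum_congr rfl hterm]
  have hsub : ∑ j ∈ Ioo 0 p, ((j : ZMod p)⁻¹)^2 = ∑ j ∈ range p, ((j : ZMod p)⁻¹)^2 := by
    apply Finset.sum_subset
    · intro x hx; rw [Finset.mem_Ioo] at hx; exact Finset.mem_range.mpr hx.2
    · intro x hx hnx
      rw [Finset.mem_range] at hx
      rw [Finset.mem_Ioo] at hnx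
      have : x = 0 := by omega
      subst this; simp
  rw [hsub, sum_range_zmod p (fun x => (x⁻¹)^2)]
  have hinv : ∑ x : ZMod p, (x⁻¹)^2 = ∑ x : ZMod p, x^2 :=
    Fintype.sum_bijective (fun x => x⁻¹) (inv_involutive.bijective) _ _ (fun x => rfl)
  rw [hinv, sum_sq_zmod p hp hp5]

noncomputable def Gp (p : ℕ) : Polynomial (ZMod (p^3)) :=
  ∑ j ∈ Ioo 0 p, Polynomial.C ((p.choose j / p : ℕ) : ZMod (p^3)) * Polynomial.X ^ j

lemma coeff_Gp (p : ℕ) (k : ℕ) :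
    (Gp p).coeff k = if k ∈ Ioo 0 p then ((p.choose k / p : ℕ) : ZMod (p^3)) else 0 := by
  rw [Gp, Polynomial.finset_sum_coeff]
  simp only [Polynomial.coeff_C_mul, Polynomial.coeff_X_pow, mul_ite, mul_one, mul_zero]
  simp only [eq_comm (a := k)]
  rw [Finset.sum_ite_eq' (Ioo 0 p) k]

lemma keyP (p : ℕ) (hp : p.Prime) :
    (1 + X : Polynomial (ZMod (p^3)))^p = 1 + X^p + Polynomial.C ((p : ℕ) : ZMod (p^3)) * Gp p := by
  ext k
  rw [Polynomial.coeff_one_add_X_pow]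
  simp only [Polynomial.coeff_add, Polynomial.coeff_one, Polynomial.coeff_X_pow,
    Polynomial.coeff_C_mul, coeff_Gp, Finset.mem_Ioo]
  by_cases h0 : k = 0
  · subst h0
    simp [hp.pos.ne', hp.pos.ne]
  · by_cases hkp : k = p
    · subst hkp
      simp [h0, hp.pos]
    · by_cases hlt : k < p
      · have hif1 : (if k = 0 then (1 : ZMod (p^3)) else 0) = 0 := if_neg h0
        have hif2 : (if k = p then (1 : ZMod (p^3)) else 0) = 0 := if_neg hkp
        have hif3 : (if 0 < k ∧ k < p then ((p.choose k / p : ℕ) : ZMod (p^3)) else 0)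
            = ((p.choose k / p : ℕ) : ZMod (p^3)) := if_pos ⟨Nat.pos_of_ne_zero h0, hlt⟩
        rw [hif1, hif2, hif3, zero_add, zero_add, ← Nat.cast_mul,
          Nat.mul_div_cancel' (Nat.Prime.dvd_choose_self hp h0 hlt)]
      · have hgt : p < k := by omega
        rw [Nat.choose_eq_zero_of_lt hgt]
        simp [h0, hkp, (by omega : ¬ k < p)]

lemma coeffA (p : ℕ) (hp : p.Prime) (t i : ℕ) :
    ((1 + (X : Polynomial (ZMod (p^3)))^p)^t).coeff i
      = if p ∣ i then ((t.choose (i/p) : ℕ) : ZMod (p^3)) else 0 := by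
  have h : (1 + (X : Polynomial (ZMod (p^3)))^p)^t
      = Polynomial.expand _ p ((1 + X)^t) := by
    rw [map_pow, map_add, map_one, Polynomial.expand_X]
  rw [h, Polynomial.coeff_expand hp.pos]
  split_ifs with hd
  · rw [Polynomial.coeff_one_add_X_pow]
  · rfl

lemma coeff_Gp_sq_ne (p : ℕ) (a : ℕ) (hpa : p ∣ a) (hap : a ≠ p) :
    (Gp p * Gp p).coeff a = 0 := by
  rw [Polynomial.coeff_mul]
  apply Finset.sum_eq_zero
  intro x hx
  rw [Finset.HasAntidiagonal.mem_antidiagonal] at hx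
  rcases Nat.lt_or_ge x.1 p with h1 | h1
  · rcases Nat.eq_zero_or_pos x.1 with h0 | h0
    · rw [coeff_Gp, if_neg (by rw [Finset.mem_Ioo]; omega)]; ring
    · rcases Nat.lt_or_ge x.2 p with h2 | h2
      · rcases Nat.eq_zero_or_pos x.2 with h20 | h20
        · rw [coeff_Gp p x.2, if_neg (by rw [Finset.mem_Ioo]; omega)]; ring
        · exfalso
          have hb : 0 < a ∧ a < 2 * p := by omega
          rcases hpa with ⟨c, hc⟩
          have hc0 : c ≠ 0 := by rintro rfl; omega
          have hc2 : c < 2 := by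
            by_contra h'
            have h2 : p * 2 ≤ p * c := Nat.mul_le_mul_left p (by omega)
            omega
          have hc1 : c = 1 := by omega
          subst hc1
          rw [mul_one] at hc
          omega
      · rw [coeff_Gp p x.2, if_neg (by rw [Finset.mem_Ioo]; omega)]; ring
  · rw [coeff_Gp, if_neg (by rw [Finset.mem_Ioo]; omega)]; ring

lemma coeff_Gp_sq_p (p : ℕ) (hp : p.Prime) :
    (Gp p * Gp p).coeff p
      = ((∑ j ∈ Ioo 0 p, (p.choose j / p) * (p.choose (p - j) / p) : ℕ) : ZMod (p^3)) := by
  rw [Polynomial.coeff_mul, Finset.Nat.sum_antidiagonal_eq_sum_range_succ_mk]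
  push_cast
  rw [← Finset.sum_subset (s₁ := Ioo 0 p) (s₂ := range (p+1))]
  · apply Finset.sum_congr rfl
    intro j hj
    rw [Finset.mem_Ioo] at hj
    rw [coeff_Gp, coeff_Gp, if_pos (Finset.mem_Ioo.mpr hj),
      if_pos (Finset.mem_Ioo.mpr ⟨by omega, by omega⟩)]
  · intro x hx; rw [Finset.mem_Ioo] at hx; exact Finset.mem_range.mpr (by omega)
  · intro x hx hnx
    rw [Finset.mem_range] at hx
    rw [Finset.mem_Ioo] at hnx
    rw [coeff_Gp p x, coeff_Gp p (p - x)]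
    rcases (by omega : x = 0 ∨ x = p) with h | h
    · rw [if_neg (c := x ∈ Ioo 0 p) (by rw [Finset.mem_Ioo]; omega)]; ring
    · rw [if_neg (c := (p - x) ∈ Ioo 0 p) (by rw [Finset.mem_Ioo]; omega)]; ring

theorem stmt3 (p : ℕ) (hp : p.Prime) (hp5 : 5 ≤ p) (n m : ℕ) (hmn : m ≤ n) :
    (n * p).choose (m * p) ≡ n.choose m [MOD p ^ 3] := by
  rw [← ZMod.natCast_eq_natCast_iff]
  set R := ZMod (p^3) with hR
  have hp3 : ((p : R))^3 = 0 := by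
    rw [← Nat.cast_pow, ZMod.natCast_self]
  have key : ((1 : Polynomial R) + X)^(n*p)
      = ∑ k ∈ range (n+1),
          (Polynomial.C ((p:ℕ) : R) * Gp p)^k * (1 + X^p)^(n-k) * ((n.choose k : ℕ) : Polynomial R) := by
    rw [mul_comm n p, pow_mul, keyP p hp, add_comm (1 + X^p) _, add_pow]
  have hcoeff : ∀ k ∈ range (n+1),
      ((Polynomial.C ((p:ℕ) : R) * Gp p)^k * (1 + X^p)^(n-k)
        * ((n.choose k : ℕ) : Polynomial R)).coeff (m*p)
      = if k = 0 then ((n.choose m : ℕ) : R) else 0 := by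
    intro k _
    have hterm : (Polynomial.C ((p:ℕ) : R) * Gp p)^k * (1 + X^p)^(n-k)
          * ((n.choose k : ℕ) : Polynomial R)
        = Polynomial.C (((p:ℕ) : R)^k * ((n.choose k : ℕ) : R))
            * ((Gp p)^k * (1 + X^p)^(n-k)) := by
      rw [mul_pow, ← map_pow, ← Polynomial.C_eq_natCast, map_mul]
      ring
    rw [hterm, Polynomial.coeff_C_mul]
    match k with
    | 0 =>
      simp only [pow_zero, one_mul, Nat.choose_zero_right, Nat.cast_one, Nat.sub_zero,
        eq_self_iff_true, if_true]
      rw [coeffA p hp n (m*p), if_pos (dvd_mul_left p m),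
        Nat.mul_div_cancel m hp.pos]
    | 1 =>
      rw [if_neg one_ne_zero]
      simp only [pow_one]
      have h0 : ((Gp p) * (1 + X^p)^(n-1)).coeff (m*p) = 0 := by
        rw [Polynomial.coeff_mul]
        apply Finset.sum_eq_zero
        intro x hx
        rw [Finset.HasAntidiagonal.mem_antidiagonal] at hx
        by_cases h1 : x.1 ∈ Ioo 0 p
        · rw [coeffA p hp (n-1) x.2, if_neg, mul_zero]
          rw [Finset.mem_Ioo] at h1
          intro h2
          have hd1 : p ∣ x.1 := by
            have he : x.1 = m*p - x.2 := by omega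
            rw [he]; exact Nat.dvd_sub (dvd_mul_left p m) h2
          have := Nat.le_of_dvd h1.1 hd1
          omega
        · rw [coeff_Gp, if_neg h1, zero_mul]
      rw [h0, mul_zero]
    | (k+2) =>
      rw [if_neg (Nat.succ_ne_zero _)]
      match k with
      | 0 =>
        simp only [zero_add]
        rw [pow_two (Gp p), Polynomial.coeff_mul, Finset.mul_sum]
        apply Finset.sum_eq_zero
        intro x hx
        rw [Finset.HasAntidiagonal.mem_antidiagonal] at hx
        by_cases h2 : p ∣ x.2
        · have h1 : p ∣ x.1 := by
            have he : x.1 = m*p - x.2 := by omega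
            rw [he]; exact Nat.dvd_sub (dvd_mul_left p m) h2
          by_cases hxp : x.1 = p
          · obtain ⟨s, hs⟩ := wolstenholme_sum p hp hp5
            rw [hxp, coeff_Gp_sq_p p hp, hs]
            push_cast
            linear_combination (((n.choose 2 : ℕ) : R) * ((s:ℕ) : R)
              * (((1:Polynomial R) + X^p)^(n-2)).coeff x.2) * hp3
          · rw [coeff_Gp_sq_ne p x.1 h1 hxp, zero_mul, mul_zero]
        · rw [coeffA p hp (n-2) x.2, if_neg h2, mul_zero, mul_zero]
      | (k+1) =>
        have : ((p:ℕ) : R)^(k+1+2) = 0 := by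
          have : (k+1+2) = 3 + k := by omega
          rw [this, pow_add, hp3, zero_mul]
        rw [this, zero_mul, zero_mul]
  calc ((((n * p).choose (m * p)) : ℕ) : R)
      = (((1 : Polynomial R) + X)^(n*p)).coeff (m*p) := by
        rw [Polynomial.coeff_one_add_X_pow]
    _ = ∑ k ∈ range (n+1), ((Polynomial.C ((p:ℕ) : R) * Gp p)^k * (1 + X^p)^(n-k)
          * ((n.choose k : ℕ) : Polynomial R)).coeff (m*p) := by
        rw [key, Polynomial.finset_sum_coeff]
    _ = ∑ k ∈ range (n+1), if k = 0 then ((n.choose m : ℕ) : R) else 0 :=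
        Finset.sum_congr rfl hcoeff
    _ = ((n.choose m : ℕ) : R) := by
        rw [Finset.sum_ite_eq' (range (n+1)) 0, if_pos (Finset.mem_range.mpr (by omega))]
end

section
/- For all nonnegative integers n ≥ m and k ≥ 1, the binomial coefficient C(n·3^k, m·3^k) is congruent to C(n·3^⌊(k−1)/2⌋, m·3^⌊(k−1)/2⌋) modulo 3^k. -/
open Finset

private def Qp (c : ℕ) : ℕ := ∏ i ∈ range (3 * c), (if 3 ∣ (i + 1) then 1 else i + 1)

private lemma Qp_succ (c : ℕ) : Qp (c + 1) = Qp c * (3 * c + 1) * (3 * c + 2) := by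
  unfold Qp
  have h3 : 3 * (c + 1) = (3 * c + 1) + 1 + 1 := by ring
  rw [h3, prod_range_succ, prod_range_succ, prod_range_succ]
  have d1 : ¬ (3 ∣ (3 * c + 1)) := by omega
  have d2 : ¬ (3 ∣ (3 * c + 2)) := by omega
  simp [d1, d2]

private lemma fact_eq (c : ℕ) : (3 * c).factorial = 3 ^ c * c.factorial * Qp c := by
  induction c with
  | zero => simp [Qp]
  | succ c ih =>
    have h3 : 3 * (c + 1) = (3 * c + 2) + 1 := by ring
    rw [h3, Nat.factorial_succ, show 3 * c + 2 = (3 * c + 1) + 1 from rfl,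
      Nat.factorial_succ, show 3 * c + 1 = (3 * c) + 1 from rfl, Nat.factorial_succ, ih,
      Qp_succ, Nat.factorial_succ]
    ring

private lemma Qp_coprime (c : ℕ) : Nat.Coprime 3 (Qp c) := by
  unfold Qp
  apply Nat.Coprime.prod_right
  intro i _
  split
  · exact Nat.coprime_one_right 3
  · exact (Nat.prime_three.coprime_iff_not_dvd).mpr (by assumption)

private lemma key_id (a b : ℕ) (h : b ≤ a) :
    a.choose b * Qp a = (3 * a).choose (3 * b) * (Qp b * Qp (a - b)) := by
  set c := a - b with hc
  have hbc : b + c = a := by omega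
  have h1 : (3 * a).choose (3 * b) * (3 * b).factorial * (3 * c).factorial
      = (3 * a).factorial := by
    have := Nat.choose_mul_factorial_mul_factorial
      (show 3 * b ≤ 3 * a from by omega)
    rwa [show 3 * a - 3 * b = 3 * c from by omega] at this
  have h2 : a.choose b * b.factorial * c.factorial = a.factorial := by
    have := Nat.choose_mul_factorial_mul_factorial h
    rwa [← hc] at this
  have key : (3 ^ a * b.factorial * c.factorial) * (a.choose b * Qp a)
      = (3 ^ a * b.factorial * c.factorial)
        * ((3 * a).choose (3 * b) * (Qp b * Qp c)) := by
    calc (3 ^ a * b.factorial * c.factorial) * (a.choose b * Qp a)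
        = (a.choose b * b.factorial * c.factorial) * 3 ^ a * Qp a := by ring
      _ = a.factorial * 3 ^ a * Qp a := by rw [h2]
      _ = (3 * a).factorial := by rw [fact_eq a]; ring
      _ = (3 * a).choose (3 * b) * (3 * b).factorial * (3 * c).factorial := h1.symm
      _ = (3 * a).choose (3 * b) * (3 ^ b * b.factorial * Qp b)
            * (3 ^ c * c.factorial * Qp c) := by rw [fact_eq b, fact_eq c]
      _ = (3 ^ (b + c) * b.factorial * c.factorial)
            * ((3 * a).choose (3 * b) * (Qp b * Qp c)) := by ring
      _ = (3 ^ a * b.factorial * c.factorial)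
            * ((3 * a).choose (3 * b) * (Qp b * Qp c)) := by rw [hbc]
  exact Nat.eq_of_mul_eq_mul_left
    (by positivity) key


private lemma shift (t b c : ℕ)
    (hb2 : (3:ℕ) ^ t ∣ 9 * (b * b)) (hbc : (3:ℕ) ^ t ∣ 9 * (b * c)) :
    (((∏ i ∈ range (3 * c), if 3 ∣ (i + 1) then 1 else (3 * b + i + 1)) : ℕ) : ZMod (3 ^ t))
      = (((∏ i ∈ range (3 * c), if 3 ∣ (i + 1) then 1 else (i + 1)) : ℕ) : ZMod (3 ^ t)) := by
  haveI : NeZero ((3:ℕ) ^ t) := ⟨pow_ne_zero _ (by norm_num)⟩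
  have hunit : ∀ x : ℕ, ¬ 3 ∣ x → IsUnit ((x : ℕ) : ZMod (3 ^ t)) := fun x hx =>
    (ZMod.isUnit_iff_coprime x (3 ^ t)).mpr
      (((Nat.prime_three.coprime_iff_not_dvd).mpr hx).symm.pow_right t)
  have hcast : ∀ (g : ℕ → ℕ),
      (((∏ i ∈ range (3 * c), if 3 ∣ (i + 1) then 1 else g i) : ℕ) : ZMod (3 ^ t))
        = ∏ i ∈ range (3 * c), (if 3 ∣ (i + 1) then 1 else ((g i : ℕ) : ZMod (3 ^ t))) := by
    intro g
    rw [Nat.cast_prod]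
    exact prod_congr rfl (fun i _ => by split <;> simp)
  set F : ℕ → ZMod (3 ^ t) := fun i => if 3 ∣ (i + 1) then 1 else ((i + 1 : ℕ) : ZMod (3 ^ t))
    with hF
  set G : ℕ → ZMod (3 ^ t) :=
    fun i => if 3 ∣ (i + 1) then 1 else ((3 * b + i + 1 : ℕ) : ZMod (3 ^ t)) with hG
  have pair : ∀ i j : ℕ, ¬ 3 ∣ (i + 1) → ¬ 3 ∣ (j + 1) → (i + 1) + (j + 1) = 3 * c →
      ((3 * b + i + 1 : ℕ) : ZMod (3 ^ t)) * ((3 * b + j + 1 : ℕ) : ZMod (3 ^ t))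
        = ((i + 1 : ℕ) : ZMod (3 ^ t)) * ((j + 1 : ℕ) : ZMod (3 ^ t)) := by
    intro i j _ _ hij
    have hn : (3 * b + i + 1) * (3 * b + j + 1) = 9 * (b * b) + 9 * (b * c) + (i + 1) * (j + 1) := by
      have h1 : (3 * b + i + 1) * (3 * b + j + 1)
          = 9 * (b * b) + 3 * b * ((i + 1) + (j + 1)) + (i + 1) * (j + 1) := by ring
      rw [hij, show 3 * b * (3 * c) = 9 * (b * c) from by ring] at h1
      exact h1
    rw [← Nat.cast_mul, hn, Nat.cast_add, Nat.cast_add,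
      (ZMod.natCast_eq_zero_iff _ _).mpr hb2,
      (ZMod.natCast_eq_zero_iff _ _).mpr hbc, Nat.cast_mul]
    ring
  set f : ℕ → ZMod (3 ^ t) := fun i => G i * (F i)⁻¹ with hf
  have hf1 : ∀ i, 3 ∣ (i + 1) → f i = 1 := by
    intro i h; simp [hf, hG, hF, h]
  set gf : ℕ → ℕ := fun i => if 3 ∣ (i + 1) then i else 3 * c - 2 - i with hgf
  have hprod : ∏ i ∈ range (3 * c), f i = 1 := by
    have h1 : ∀ i ∈ range (3 * c), f i * f (gf i) = 1 := by
      intro i hi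
      by_cases h : 3 ∣ (i + 1)
      · simp only [hgf, if_pos h]
        rw [hf1 i h, one_mul]
      · rw [mem_range] at hi
        have hle : i + 2 ≤ 3 * c := by omega
        have hsum : (i + 1) + ((3 * c - 2 - i) + 1) = 3 * c := by omega
        have hj : ¬ 3 ∣ ((3 * c - 2 - i) + 1) := by omega
        simp only [hgf, if_neg h]
        simp only [hf, hG, hF, if_neg h, if_neg hj]
        calc (((3 * b + i + 1 : ℕ) : ZMod (3 ^ t)) * ((i + 1 : ℕ) : ZMod (3 ^ t))⁻¹)
              * (((3 * b + (3 * c - 2 - i) + 1 : ℕ) : ZMod (3 ^ t))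
                * (((3 * c - 2 - i) + 1 : ℕ) : ZMod (3 ^ t))⁻¹)
            = (((3 * b + i + 1 : ℕ) : ZMod (3 ^ t))
                * ((3 * b + (3 * c - 2 - i) + 1 : ℕ) : ZMod (3 ^ t)))
              * (((i + 1 : ℕ) : ZMod (3 ^ t))⁻¹
                * (((3 * c - 2 - i) + 1 : ℕ) : ZMod (3 ^ t))⁻¹) := by ring
          _ = (((i + 1 : ℕ) : ZMod (3 ^ t)) * (((3 * c - 2 - i) + 1 : ℕ) : ZMod (3 ^ t)))
              * (((i + 1 : ℕ) : ZMod (3 ^ t))⁻¹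
                * (((3 * c - 2 - i) + 1 : ℕ) : ZMod (3 ^ t))⁻¹) := by
                  rw [pair i (3 * c - 2 - i) h hj hsum]
          _ = (((i + 1 : ℕ) : ZMod (3 ^ t)) * ((i + 1 : ℕ) : ZMod (3 ^ t))⁻¹)
              * ((((3 * c - 2 - i) + 1 : ℕ) : ZMod (3 ^ t))
                * (((3 * c - 2 - i) + 1 : ℕ) : ZMod (3 ^ t))⁻¹) := by ring
          _ = 1 := by
                rw [ZMod.mul_inv_of_unit _ (hunit _ h), ZMod.mul_inv_of_unit _ (hunit _ hj),
                  one_mul]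
    have h3 : ∀ i ∈ range (3 * c), f i ≠ 1 → gf i ≠ i := by
      intro i hi hne
      by_cases h : 3 ∣ (i + 1)
      · exact absurd (hf1 i h) hne
      · rw [mem_range] at hi
        simp only [hgf, if_neg h]
        omega
    have hmem : ∀ i ∈ range (3 * c), gf i ∈ range (3 * c) := by
      intro i hi
      rw [mem_range] at *
      simp only [hgf]
      split <;> omega
    have h4 : ∀ i ∈ range (3 * c), gf (gf i) = i := by
      intro i hi
      rw [mem_range] at hi
      by_cases h : 3 ∣ (i + 1)
      · simp [hgf, h]
      · have hj : ¬ 3 ∣ ((3 * c - 2 - i) + 1) := by omega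
        simp only [hgf, if_neg h, if_neg hj]
        omega
    exact prod_involution (fun i _ => gf i) (fun i hi => h1 i hi) (fun i hi => h3 i hi)
      (fun i hi => hmem i hi) (fun i hi => h4 i hi)
  have hFinv : ∀ i ∈ range (3 * c), (F i)⁻¹ * F i = 1 := by
    intro i _
    by_cases h : 3 ∣ (i + 1)
    · simp [hF, h]
    · simp only [hF, if_neg h]
      exact ZMod.inv_mul_of_unit _ (hunit _ h)
  have hFF : (∏ i ∈ range (3 * c), (F i)⁻¹) * (∏ i ∈ range (3 * c), F i) = 1 := by
    rw [← prod_mul_distrib]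
    exact prod_eq_one hFinv
  have hsplit : (∏ i ∈ range (3 * c), f i)
      = (∏ i ∈ range (3 * c), G i) * (∏ i ∈ range (3 * c), (F i)⁻¹) := by
    rw [← prod_mul_distrib]
  have hGF : (∏ i ∈ range (3 * c), G i) = ∏ i ∈ range (3 * c), F i := by
    calc (∏ i ∈ range (3 * c), G i)
        = (∏ i ∈ range (3 * c), G i)
          * ((∏ i ∈ range (3 * c), (F i)⁻¹) * (∏ i ∈ range (3 * c), F i)) := by
            rw [hFF, mul_one]
      _ = ((∏ i ∈ range (3 * c), G i) * (∏ i ∈ range (3 * c), (F i)⁻¹))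
          * (∏ i ∈ range (3 * c), F i) := by ring
      _ = (∏ i ∈ range (3 * c), f i) * (∏ i ∈ range (3 * c), F i) := by rw [hsplit]
      _ = ∏ i ∈ range (3 * c), F i := by rw [hprod, one_mul]
  rw [hcast (fun i => 3 * b + i + 1), hcast (fun i => i + 1)]
  exact hGF

private lemma core (v a b : ℕ) (hba : b ≤ a) (hb : 3 ^ v ∣ b) (hc : 3 ^ v ∣ (a - b)) :
    (3 * a).choose (3 * b) ≡ a.choose b [MOD 3 ^ (2 * v + 2)] := by
  set t := 2 * v + 2 with ht
  set c := a - b with hcdef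
  haveI : NeZero ((3:ℕ) ^ t) := ⟨pow_ne_zero _ (by norm_num)⟩
  have hsplitQ : Qp a
      = Qp b * ∏ i ∈ range (3 * c), (if 3 ∣ (i + 1) then 1 else (3 * b + i + 1)) := by
    have h3a : 3 * a = 3 * b + 3 * c := by omega
    unfold Qp
    rw [h3a, prod_range_add]
    congr 1
    refine prod_congr rfl fun i _ => ?_
    have hiff : (3 ∣ (3 * b + i + 1)) ↔ (3 ∣ (i + 1)) := by omega
    simp only [hiff]
  have he : (3:ℕ) ^ t = 9 * (3 ^ v * 3 ^ v) := by
    rw [ht, show 2 * v + 2 = v + v + 2 from by ring, pow_add, pow_add]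
    ring
  have hdvd1 : (3:ℕ) ^ t ∣ 9 * (b * b) := by
    rw [he]; exact mul_dvd_mul_left 9 (mul_dvd_mul hb hb)
  have hdvd2 : (3:ℕ) ^ t ∣ 9 * (b * c) := by
    rw [he]; exact mul_dvd_mul_left 9 (mul_dvd_mul hb hc)
  have hS := shift t b c hdvd1 hdvd2
  have hQa : ((Qp a : ℕ) : ZMod (3 ^ t))
      = ((Qp b : ℕ) : ZMod (3 ^ t)) * ((Qp c : ℕ) : ZMod (3 ^ t)) := by
    rw [hsplitQ, Nat.cast_mul, hS]
    rfl
  have hz := congrArg (Nat.cast : ℕ → ZMod (3 ^ t)) (key_id a b hba)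
  push_cast at hz
  rw [← hcdef] at hz
  rw [hQa] at hz
  have hu : IsUnit (((Qp b : ℕ) : ZMod (3 ^ t)) * ((Qp c : ℕ) : ZMod (3 ^ t))) := by
    rw [← Nat.cast_mul]
    exact (ZMod.isUnit_iff_coprime _ _).mpr
      (((Qp_coprime b).mul_right (Qp_coprime c)).symm.pow_right t)
  have hcancel : ((a.choose b : ℕ) : ZMod (3 ^ t))
      = (((3 * a).choose (3 * b) : ℕ) : ZMod (3 ^ t)) := hu.mul_right_cancel hz
  exact ((ZMod.natCast_eq_natCast_iff _ _ _).mp hcancel).symm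

private lemma step (n m e : ℕ) (h : m ≤ n) (he : 1 ≤ e) :
    (n * 3 ^ e).choose (m * 3 ^ e) ≡ (n * 3 ^ (e - 1)).choose (m * 3 ^ (e - 1))
      [MOD 3 ^ (2 * e)] := by
  have h3 : (3:ℕ) ^ e = 3 * 3 ^ (e - 1) := by
    conv_lhs => rw [show e = (e - 1) + 1 from by omega]
    rw [pow_succ]
    ring
  have h1 : n * 3 ^ e = 3 * (n * 3 ^ (e - 1)) := by rw [h3]; ring
  have h2 : m * 3 ^ e = 3 * (m * 3 ^ (e - 1)) := by rw [h3]; ring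
  have hmod : 2 * (e - 1) + 2 = 2 * e := by omega
  rw [h1, h2, ← hmod]
  apply core
  · exact Nat.mul_le_mul_right _ h
  · exact dvd_mul_left _ _
  · rw [show n * 3 ^ (e - 1) - m * 3 ^ (e - 1) = (n - m) * 3 ^ (e - 1) from
      (Nat.sub_mul n m _).symm]
    exact dvd_mul_left _ _

theorem stmt7 (n m k : ℕ) (hmn : m ≤ n) (hk : 1 ≤ k) :
    (n * 3 ^ k).choose (m * 3 ^ k) ≡
      (n * 3 ^ ((k - 1) / 2)).choose (m * 3 ^ ((k - 1) / 2)) [MOD 3 ^ k] := by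
  have claim : ∀ d e, e + d = k → (k - 1) / 2 ≤ e →
      (n * 3 ^ k).choose (m * 3 ^ k) ≡ (n * 3 ^ e).choose (m * 3 ^ e) [MOD 3 ^ k] := by
    intro d
    induction d with
    | zero =>
      intro e h1 _
      rw [show e = k from by omega]
    | succ d ih =>
      intro e h1 h2
      have hik := ih (e + 1) (by omega) (by omega)
      have hstep := step n m (e + 1) hmn (by omega)
      have hw : (3:ℕ) ^ k ∣ 3 ^ (2 * (e + 1)) := pow_dvd_pow 3 (by omega)
      exact hik.trans (hstep.of_dvd hw)
  exact claim (k - (k - 1) / 2) ((k - 1) / 2) (by omega) le_rfl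
end
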